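/- For every a ∈ ℤ/d and every integer k with 0 ≤ k ≤ d − 2, the following identity holds in R: P_{[a, a+k]} = Σ_{r=0}^{k+1} p^r · L_{[a, a+k+1] \ {a+r}}, where [a, a+k] := {a + j : 0 ≤ j ≤ k} ⊆ ℤ/d. -/
import Mathlib


open MvPolynomial Finset

noncomputable section

/-- The ideal of `ℚ[x_i : i ∈ ℤ/d]` generated by the squares of the variables. -/
def sqIdeal (d : ℕ) : Ideal (MvPolynomial (ZMod d) ℚ) :=
  Ideal.span (Set.range fun i : ZMod d => (X i) ^ 2)

/-- The ring `R = ℚ[x_i : i ∈ ℤ/d]/(x_i²)`. -/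
abbrev ZipRing (d : ℕ) := MvPolynomial (ZMod d) ℚ ⧸ sqIdeal d

/-- The class `l_i` of the variable `x_i` in `R`. -/
def lcl (d : ℕ) (i : ZMod d) : ZipRing d := Ideal.Quotient.mk (sqIdeal d) (X i)

/-- The Hodge–Chern monomial `L_I = ∏_{i ∈ I} l_i`. -/
def Lmon (d : ℕ) (I : Finset (ZMod d)) : ZipRing d := ∏ i ∈ I, lcl d i

/-- `N_i = p·l_i − l_{i+1}`. -/
def Nelt (d p : ℕ) (i : ZMod d) : ZipRing d := (p : ZipRing d) * lcl d i - lcl d (i + 1)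

/-- `P_i = p·l_i + l_{i+1}`. -/
def Pelt (d p : ℕ) (i : ZMod d) : ZipRing d := (p : ZipRing d) * lcl d i + lcl d (i + 1)

/-- The strata class `N_I = ∏_{i ∈ I} N_i`. -/
def Nmon (d p : ℕ) (I : Finset (ZMod d)) : ZipRing d := ∏ i ∈ I, Nelt d p i

/-- `P_I = ∏_{i ∈ I} P_i`. -/
def Pmon (d p : ℕ) (I : Finset (ZMod d)) : ZipRing d := ∏ i ∈ I, Pelt d p i

/-- The interval `[a, a+k] = {a, a+1, …, a+k} ⊆ ℤ/d`. -/
def intvl (d : ℕ) (a : ZMod d) (k : ℕ) : Finset (ZMod d) :=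
  (Finset.range (k + 1)).image fun j : ℕ => a + (j : ZMod d)


lemma lcl_sq (d : ℕ) (i : ZMod d) : lcl d i * lcl d i = 0 := by
  rw [lcl, ← map_mul, ← sq]
  exact Ideal.Quotient.eq_zero_iff_mem.mpr (Ideal.subset_span ⟨i, rfl⟩)

lemma Lmon_mul_self (d : ℕ) {I : Finset (ZMod d)} {i : ZMod d} (h : i ∈ I) :
    Lmon d I * lcl d i = 0 := by
  rw [Lmon, ← Finset.prod_erase_mul _ _ h, mul_assoc, lcl_sq, mul_zero]

lemma Lmon_mul_new (d : ℕ) {I : Finset (ZMod d)} {i : ZMod d} (h : i ∉ I) :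
    Lmon d I * lcl d i = Lmon d (insert i I) := by
  rw [Lmon, Lmon, Finset.prod_insert h, mul_comm]

lemma mem_intvl {d : ℕ} {a : ZMod d} {k : ℕ} {x : ZMod d} :
    x ∈ intvl d a k ↔ ∃ j ≤ k, a + (j : ZMod d) = x := by
  simp [intvl, Nat.lt_succ_iff]

lemma cast_inj_of_lt {d j1 j2 : ℕ} (h1 : j1 < d) (h2 : j2 < d)
    (h : (j1 : ZMod d) = j2) : j1 = j2 := by
  have := (ZMod.natCast_eq_natCast_iff _ _ _).mp h
  rwa [Nat.ModEq, Nat.mod_eq_of_lt h1, Nat.mod_eq_of_lt h2] at this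

lemma add_notMem_intvl {d : ℕ} (a : ZMod d) {k m : ℕ} (hm : m < d) (hk : k < m) :
    a + (m : ZMod d) ∉ intvl d a k := by
  rw [mem_intvl]
  rintro ⟨j, hj, h⟩
  have : j = m := cast_inj_of_lt (lt_of_le_of_lt hj (hk.trans hm)) hm (add_left_cancel h)
  omega

lemma intvl_succ (d : ℕ) (a : ZMod d) (k : ℕ) :
    intvl d a (k + 1) = insert (a + ((k + 1 : ℕ) : ZMod d)) (intvl d a k) := by
  rw [intvl, intvl, Finset.range_add_one, Finset.image_insert]

lemma smul_eq_cast_mul (d p : ℕ) (r : ℕ) (x : ZipRing d) :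
    (p : ℚ) ^ r • x = (p : ZipRing d) ^ r * x := by
  rw [← Nat.cast_pow, Nat.cast_smul_eq_nsmul, nsmul_eq_mul, Nat.cast_pow]


/-- `P_{[a,a+k]} = Σ_{r=0}^{k+1} p^r · L_{[a,a+k+1] \ {a+r}}` for `0 ≤ k ≤ d − 2`. -/
theorem stmt5 (d p : ℕ) [NeZero d] (hp : p.Prime) (a : ZMod d) (k : ℕ)
    (hk : (k : ℤ) ≤ (d : ℤ) - 2) :
    Pmon d p (intvl d a k) =
      ∑ r ∈ Finset.range (k + 2),
        (p : ℚ) ^ r • Lmon d ((intvl d a (k + 1)).erase (a + (r : ZMod d))) := by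
  simp only [smul_eq_cast_mul]
  induction k with
  | zero =>
      have hd : 2 ≤ d := by omega
      have h0 : intvl d a 0 = {a} := by simp [intvl]
      have hne : a + ((1 : ℕ) : ZMod d) ≠ a := by
        have := add_notMem_intvl a (show 1 < d by omega) (show 0 < 1 by omega)
        rw [h0] at this; simpa using this
      have h1 : intvl d a 1 = insert (a + ((1 : ℕ) : ZMod d)) {a} := by
        rw [show (1 : ℕ) = 0 + 1 from rfl, intvl_succ, h0]
      rw [Finset.sum_range_succ, Finset.sum_range_succ, Finset.sum_range_zero, zero_add,
        h0, h1]
      simp only [Nat.cast_zero, Nat.cast_one, add_zero]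
      rw [Finset.erase_insert_of_ne (by simpa using hne), Finset.erase_singleton,
        Finset.erase_insert (by simpa using hne)]
      simp only [Pmon, Pelt, Lmon, Finset.prod_singleton, Finset.prod_insert
        (Finset.notMem_empty _), Finset.prod_empty, pow_zero, pow_one, one_mul, mul_one]
      push_cast
      ring
  | succ k ih =>
      have hd : k + 3 ≤ d := by omega
      have ih' := ih (by push_cast; omega)
      set i1 : ZMod d := a + ((k + 1 : ℕ) : ZMod d) with hi1
      set i2 : ZMod d := a + ((k + 2 : ℕ) : ZMod d) with hi2
      have hmem1 : i1 ∉ intvl d a k := add_notMem_intvl a (by omega) (by omega)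
      have hmem2 : i2 ∉ intvl d a (k + 1) := add_notMem_intvl a (by omega) (by omega)
      have e1 : i1 + 1 = i2 := by rw [hi1, hi2]; push_cast; ring
      have key : Pmon d p (intvl d a (k + 1)) = Pmon d p (intvl d a k) * Pelt d p i1 := by
        rw [Pmon, Pmon, intvl_succ, ← hi1, Finset.prod_insert hmem1, mul_comm]
      rw [key, ih', Finset.sum_mul]
      have Erase1 : (intvl d a (k + 1)).erase i1 = intvl d a k := by
        rw [intvl_succ, ← hi1, Finset.erase_insert hmem1]
      have Erase2 : (intvl d a (k + 2)).erase i2 = intvl d a (k + 1) := by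
        rw [intvl_succ d a (k + 1), ← hi2, Finset.erase_insert hmem2]
      have term : ∀ r ∈ Finset.range (k + 2),
          (p : ZipRing d) ^ r * Lmon d ((intvl d a (k + 1)).erase (a + (r : ZMod d)))
            * Pelt d p i1 =
          (p : ZipRing d) ^ r * Lmon d ((intvl d a (k + 2)).erase (a + (r : ZMod d)))
          + (if r = k + 1 then (p : ZipRing d) ^ (k + 2) *
              Lmon d ((intvl d a (k + 2)).erase i2) else 0) := by
        intro r hr
        rw [Finset.mem_range] at hr
        have hrd : r < d := by omega
        have hner : a + (r : ZMod d) ≠ i2 := by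
          intro h
          have := cast_inj_of_lt hrd (show k + 2 < d by omega) (add_left_cancel (hi2 ▸ h))
          omega
        have hEr2 : (intvl d a (k + 2)).erase (a + (r : ZMod d)) =
            insert i2 ((intvl d a (k + 1)).erase (a + (r : ZMod d))) := by
          rw [intvl_succ d a (k + 1), ← hi2, Finset.erase_insert_of_ne hner.symm]
        have hi2not : i2 ∉ (intvl d a (k + 1)).erase (a + (r : ZMod d)) :=
          fun h => hmem2 (Finset.mem_of_mem_erase h)
        have h2 : Lmon d ((intvl d a (k + 1)).erase (a + (r : ZMod d))) * lcl d i2 =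
            Lmon d ((intvl d a (k + 2)).erase (a + (r : ZMod d))) := by
          rw [Lmon_mul_new d hi2not, ← hEr2]
        rw [Pelt, e1]
        rcases eq_or_ne r (k + 1) with hrk | hrk
        · subst hrk
          rw [if_pos rfl, ← hi1, Erase1]
          have h1 : Lmon d (intvl d a k) * lcl d i1 =
              Lmon d ((intvl d a (k + 2)).erase i2) := by
            rw [Lmon_mul_new d hmem1, ← intvl_succ, ← Erase2]
          rw [Erase1] at h2
          linear_combination (p : ZipRing d) ^ (k + 2) * h1 + (p : ZipRing d) ^ (k + 1) * h2
        · have hmemE : i1 ∈ (intvl d a (k + 1)).erase (a + (r : ZMod d)) := by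
            refine Finset.mem_erase.mpr ⟨?_, ?_⟩
            · intro h
              rw [hi1] at h
              have := cast_inj_of_lt (show k + 1 < d by omega) hrd (add_left_cancel h)
              omega
            · rw [intvl_succ, ← hi1]
              exact Finset.mem_insert_self _ _
          have h1 : Lmon d ((intvl d a (k + 1)).erase (a + (r : ZMod d))) * lcl d i1 = 0 :=
            Lmon_mul_self d hmemE
          rw [if_neg hrk]
          linear_combination (p : ZipRing d) ^ r * (p : ZipRing d) * h1
            + (p : ZipRing d) ^ r * h2
      rw [Finset.sum_congr rfl term, Finset.sum_add_distrib, Finset.sum_ite_eq'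
        (Finset.range (k + 2)) (k + 1)]
      simp only [Finset.mem_range, if_pos (by omega : k + 1 < k + 2)]
      rw [hi2]
      simp only [show k + 1 + 1 = k + 2 from rfl, show k + 1 + 2 = k + 2 + 1 from rfl]
      conv_rhs => rw [Finset.sum_range_succ]
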